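/- Let F_q be a finite field whose cardinality q satisfies q ≡ 7 (mod 8). Then for every α ∈ F_q with α ≠ 0 there exist x1, x2, x3, y1, y2, y3 ∈ F_q satisfying x1 + x2 + x3 = α, y1 + y2 + y3 = 0, x1² + y1² = 1, x2² + y2² = 1, and x3² + y3² = 1. -/

import Mathlib

open Finset

/-- construction lemma: given circle points with the key relation, build the solution. -/
lemma construct_solution {F : Type*} [Field F] (α a b c d : F) (h2 : (2 : F) ≠ 0)
    (hb : a ^ 2 + b ^ 2 = 1) (hd : c ^ 2 + d ^ 2 = 1)
    (h1c : (1 : F) + c ≠ 0) (key : α ^ 2 + 1 - 2 * α * a = 2 + 2 * c) :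
    ∃ x1 x2 x3 y1 y2 y3 : F,
      x1 + x2 + x3 = α ∧ y1 + y2 + y3 = 0 ∧
      x1 ^ 2 + y1 ^ 2 = 1 ∧ x2 ^ 2 + y2 ^ 2 = 1 ∧ x3 ^ 2 + y3 ^ 2 = 1 := by
  set e : F := (2 : F)⁻¹ with he
  have he2 : 2 * e = 1 := by rw [he]; field_simp
  set t : F := d / (1 + c) with ht
  have htsq : (1 + c) * (1 + t ^ 2) = 2 := by
    rw [ht]
    field_simp
    linear_combination hd
  have hN : (α - a) ^ 2 + b ^ 2 = 2 + 2 * c := by linear_combination hb + key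
  have circ1 : (((α - a) + t * b) * e) ^ 2 + ((-b + t * (α - a)) * e) ^ 2 = 1 := by
    have h : (((α - a) + t * b) * e) ^ 2 + ((-b + t * (α - a)) * e) ^ 2
        = (1 + t ^ 2) * ((α - a) ^ 2 + b ^ 2) * e ^ 2 := by ring
    rw [h, hN]
    linear_combination 2 * e ^ 2 * htsq + (2 * e + 1) * he2
  have circ2 : (((α - a) - t * b) * e) ^ 2 + ((-b - t * (α - a)) * e) ^ 2 = 1 := by
    have h : (((α - a) - t * b) * e) ^ 2 + ((-b - t * (α - a)) * e) ^ 2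
        = (1 + t ^ 2) * ((α - a) ^ 2 + b ^ 2) * e ^ 2 := by ring
    rw [h, hN]
    linear_combination 2 * e ^ 2 * htsq + (2 * e + 1) * he2
  exact ⟨((α - a) + t * b) * e, ((α - a) - t * b) * e, a,
    (-b + t * (α - a)) * e, (-b - t * (α - a)) * e, b,
    by linear_combination (α - a) * he2, by linear_combination (-b) * he2,
    circ1, circ2, hb⟩

/-- Let `F` be a finite field with `card F ≡ 7 (mod 8)`. Then for every nonzero
`α ∈ F` the system `x1+x2+x3 = α`, `y1+y2+y3 = 0`, `xi² + yi² = 1` is solvable. -/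
theorem system_even_solvable (F : Type*) [Field F] [Fintype F]
    (h7 : Fintype.card F % 8 = 7) :
    ∀ α : F, α ≠ 0 →
      ∃ x1 x2 x3 y1 y2 y3 : F,
        x1 + x2 + x3 = α ∧ y1 + y2 + y3 = 0 ∧
        x1 ^ 2 + y1 ^ 2 = 1 ∧ x2 ^ 2 + y2 ^ 2 = 1 ∧ x3 ^ 2 + y3 ^ 2 = 1 := by
  classical
  intro α hα
  set q := Fintype.card F with hqdef
  have h4 : q % 4 = 3 := by omega
  have hns : ¬ IsSquare (-1 : F) := by
    rw [FiniteField.isSquare_neg_one_iff]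
    simpa [← hqdef] using h4
  have h2 : (2 : F) ≠ 0 := by
    intro h
    apply hns
    have h1 : (-1 : F) = 1 := by linear_combination -h
    rw [h1]; exact IsSquare.one
  have hno : ∀ t : F, 1 + t ^ 2 ≠ 0 := by
    intro t h
    exact hns ⟨t, by linear_combination -h - t * t * (sq t)⟩
  -- the set of x-coordinates of the circle
  set X : Finset F := univ.filter (fun x => ∃ y : F, x ^ 2 + y ^ 2 = 1) with hX
  have hmemX : ∀ x : F, x ∈ X ↔ ∃ y : F, x ^ 2 + y ^ 2 = 1 := by
    intro x; simp [hX]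
  -- parametrization g of the circle
  set g : F → F := fun t => (1 - t ^ 2) / (1 + t ^ 2) with hg
  have hgval : ∀ t : F, g t = (1 - t ^ 2) / (1 + t ^ 2) := fun t => rfl
  have hgX : ∀ t : F, g t ∈ X := by
    intro t
    rw [hmemX]
    refine ⟨2 * t / (1 + t ^ 2), ?_⟩
    rw [hgval, div_pow, div_pow, ← add_div, div_eq_iff (pow_ne_zero 2 (hno t))]
    ring
  have hgfib : ∀ s t : F, g s = g t → s = t ∨ s = -t := by
    intro s t h
    rw [hgval, hgval] at h
    have h' : (1 - s ^ 2) * (1 + t ^ 2) = (1 - t ^ 2) * (1 + s ^ 2) :=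
      (div_eq_div_iff (hno s) (hno t)).mp h
    have h0 : 2 * ((s - t) * (s + t)) = 0 := by linear_combination -h'
    rcases mul_eq_zero.mp ((mul_eq_zero.mp h0).resolve_left h2) with h | h
    · left; exact sub_eq_zero.mp h
    · right; exact eq_neg_of_add_eq_zero_left h
  -- the image of g has at least (q+1)/2 elements
  have himg : q ≤ 2 * (univ.image g).card := by
    have hle := Finset.card_le_mul_card_image (f := g) univ 2 ?_
    · simpa [hqdef] using hle
    · intro b hb
      obtain ⟨t, _, ht⟩ := Finset.mem_image.mp hb
      have hsub : (univ.filter fun x => g x = b) ⊆ {t, -t} := by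
        intro s hs
        have hgs : g s = g t := by
          rw [ht]; exact (Finset.mem_filter.mp hs).2
        rcases hgfib s t hgs with h | h <;> simp [h]
      calc (univ.filter fun x => g x = b).card ≤ ({t, -t} : Finset F).card :=
            Finset.card_le_card hsub
        _ ≤ 2 := Finset.card_insert_le _ _ |>.trans (by simp)
  -- -1 is in X but not in the image of g
  have hm1X : (-1 : F) ∈ X := by rw [hmemX]; exact ⟨0, by ring⟩
  have hm1g : (-1 : F) ∉ univ.image g := by
    intro h
    obtain ⟨t, _, ht⟩ := Finset.mem_image.mp h
    rw [hgval t] at ht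
    have ht' : 1 - t ^ 2 = -1 * (1 + t ^ 2) := (div_eq_iff (hno t)).mp ht
    exact h2 (by linear_combination ht')
  have hXcard : q + 3 ≤ 2 * X.card := by
    have hins : insert (-1 : F) (univ.image g) ⊆ X := by
      intro x hx
      rcases Finset.mem_insert.mp hx with h | h
      · rw [h]; exact hm1X
      · obtain ⟨t, _, ht⟩ := Finset.mem_image.mp h
        rw [← ht]; exact hgX t
    have hc1 := Finset.card_le_card hins
    rw [Finset.card_insert_of_notMem hm1g] at hc1
    have hodd : q % 2 = 1 := by omega
    omega
  -- pigeonhole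
  set A : Finset F := X.image (fun a => α ^ 2 + 1 - 2 * α * a) with hA
  set B : Finset F := X.image (fun c => 2 + 2 * c) with hB
  have hAcard : A.card = X.card := by
    apply Finset.card_image_of_injective
    intro x y h
    have h' : 2 * α * x = 2 * α * y := by linear_combination -h
    exact mul_left_cancel₀ (mul_ne_zero h2 hα) h'
  have hBcard : B.card = X.card := by
    apply Finset.card_image_of_injective
    intro x y h
    have h' : 2 * x = 2 * y := by linear_combination h
    exact mul_left_cancel₀ h2 h'
  have hinter : 3 ≤ (A ∩ B).card := by
    have h1 : (A ∪ B).card + (A ∩ B).card = A.card + B.card :=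
      Finset.card_union_add_card_inter A B
    have h2' : (A ∪ B).card ≤ q := by
      rw [hqdef, ← Finset.card_univ]
      exact Finset.card_le_univ _
    omega
  have hne : ((A ∩ B).erase 0).Nonempty := by
    apply Finset.card_pos.mp
    have h3 := Finset.pred_card_le_card_erase (a := (0 : F)) (s := A ∩ B)
    omega
  obtain ⟨N, hN⟩ := hne
  have hN0 : N ≠ 0 := Finset.ne_of_mem_erase hN
  have hNAB := Finset.mem_of_mem_erase hN
  obtain ⟨a, haX, ha⟩ := Finset.mem_image.mp (Finset.mem_inter.mp hNAB).1
  obtain ⟨c, hcX, hc⟩ := Finset.mem_image.mp (Finset.mem_inter.mp hNAB).2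
  obtain ⟨b, hb⟩ := (hmemX a).mp haX
  obtain ⟨d, hd⟩ := (hmemX c).mp hcX
  have h1c : (1 : F) + c ≠ 0 := by
    intro h
    apply hN0
    rw [← hc]
    linear_combination 2 * h
  exact construct_solution α a b c d h2 hb hd h1c (by rw [ha, ← hc])
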